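/- arXiv:2002.05142 — 2 statements merged into one kernel-verified Lean document; each statement's English description precedes it below -/
import Mathlib

section
/- For all natural numbers g, m, N with 1 ≤ m ≤ g−1, the binomial coefficient identity C(g,m)·C(N+g−1, g−1) = C(N+g−m−1, g−m)·C(N+g−1, m−1) + C(N+g−m−1, g−m−1)·C(N+g, m) holds (where C(a,b) denotes the binomial coefficient 'a choose b', equal to 0 when b > a). -/
open Nat

lemma binomial_key_aux (n a b : ℕ) :
    Nat.choose (a+b+2) (a+1) * Nat.choose (n+a+b+2) (a+b+1) =
      Nat.choose (n+b+1) (b+1) * Nat.choose (n+a+b+2) a +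
        Nat.choose (n+b+1) b * Nat.choose (n+a+b+3) (a+1) := by
  have cast_inj : Function.Injective (Nat.cast : ℕ → ℚ) := Nat.cast_injective
  apply cast_inj
  push_cast
  have e1 : ((a+b+2).choose (a+1) : ℚ) = (a+b+2)! / ((a+1)! * (b+1)!) := by
    rw [Nat.cast_choose ℚ (by omega), show a+b+2-(a+1) = b+1 from by omega]
  have e2 : ((n+a+b+2).choose (a+b+1) : ℚ) = (n+a+b+2)! / ((a+b+1)! * (n+1)!) := by
    rw [Nat.cast_choose ℚ (by omega), show n+a+b+2-(a+b+1) = n+1 from by omega]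
  have e3 : ((n+b+1).choose (b+1) : ℚ) = (n+b+1)! / ((b+1)! * n !) := by
    rw [Nat.cast_choose ℚ (by omega), show n+b+1-(b+1) = n from by omega]
  have e4 : ((n+a+b+2).choose a : ℚ) = (n+a+b+2)! / (a ! * (n+b+2)!) := by
    rw [Nat.cast_choose ℚ (by omega), show n+a+b+2-a = n+b+2 from by omega]
  have e5 : ((n+b+1).choose b : ℚ) = (n+b+1)! / (b ! * (n+1)!) := by
    rw [Nat.cast_choose ℚ (by omega), show n+b+1-b = n+1 from by omega]
  have e6 : ((n+a+b+3).choose (a+1) : ℚ) = (n+a+b+3)! / ((a+1)! * (n+b+2)!) := by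
    rw [Nat.cast_choose ℚ (by omega), show n+a+b+3-(a+1) = n+b+2 from by omega]
  rw [e1, e2, e3, e4, e5, e6]
  have f1 : ((a+b+2)! : ℚ) = (a+b+2) * (a+b+1)! := by
    rw [show a+b+2 = (a+b+1)+1 from by ring, Nat.factorial_succ]; push_cast; ring
  have f2 : ((a+1)! : ℚ) = (a+1) * a ! := by rw [Nat.factorial_succ]; push_cast; ring
  have f3 : ((b+1)! : ℚ) = (b+1) * b ! := by rw [Nat.factorial_succ]; push_cast; ring
  have f4 : ((n+1)! : ℚ) = (n+1) * n ! := by rw [Nat.factorial_succ]; push_cast; ring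
  have f5 : ((n+b+2)! : ℚ) = (n+b+2) * (n+b+1)! := by
    rw [show n+b+2 = (n+b+1)+1 from by ring, Nat.factorial_succ]; push_cast; ring
  have f6 : ((n+a+b+3)! : ℚ) = (n+a+b+3) * (n+a+b+2)! := by
    rw [show n+a+b+3 = (n+a+b+2)+1 from by ring, Nat.factorial_succ]; push_cast; ring
  rw [f1, f2, f3, f4, f5, f6]
  have p1 : (a ! : ℚ) ≠ 0 := by positivity
  have p2 : (b ! : ℚ) ≠ 0 := by positivity
  have p3 : (n ! : ℚ) ≠ 0 := by positivity
  have p4 : ((a+b+1)! : ℚ) ≠ 0 := by positivity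
  have p5 : ((n+b+1)! : ℚ) ≠ 0 := by positivity
  have p6 : ((n+a+b+2)! : ℚ) ≠ 0 := by positivity
  field_simp
  ring

theorem binomial_recursion_step (g m N : ℕ) (h1 : 1 ≤ m) (h2 : m ≤ g - 1) :
    Nat.choose g m * Nat.choose (N + g - 1) (g - 1) =
      Nat.choose (N + g - m - 1) (g - m) * Nat.choose (N + g - 1) (m - 1) +
        Nat.choose (N + g - m - 1) (g - m - 1) * Nat.choose (N + g) m := by
  obtain ⟨a, rfl⟩ : ∃ a, m = a + 1 := ⟨m - 1, by omega⟩
  obtain ⟨b, rfl⟩ : ∃ b, g = a + b + 2 := ⟨g - (a + 2), by omega⟩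
  rcases N with _ | n
  · rw [show 0 + (a+b+2) - 1 = a+b+1 from by omega,
      show a+b+2 - 1 = a+b+1 from by omega,
      show 0 + (a+b+2) - (a+1) - 1 = b from by omega,
      show a+b+2 - (a+1) - 1 = b from by omega,
      show a+b+2 - (a+1) = b+1 from by omega,
      show a+1-1 = a from by omega, show 0 + (a+b+2) = a+b+2 from by omega]
    simp [Nat.choose_self, Nat.choose_succ_self]
  · rw [show n+1 + (a+b+2) - 1 = n+a+b+2 from by omega,
      show a+b+2 - 1 = a+b+1 from by omega,
      show n+1 + (a+b+2) - (a+1) - 1 = n+b+1 from by omega,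
      show a+b+2 - (a+1) - 1 = b from by omega,
      show a+b+2 - (a+1) = b+1 from by omega,
      show a+1-1 = a from by omega,
      show n+1 + (a+b+2) = n+a+b+3 from by omega]
    exact binomial_key_aux n a b
end

section
/- Let A be a (not necessarily commutative) ring, g ≥ 1 a natural number, D : A → A an additive map, and ξ, ξ', α : Fin g → A families of elements. For each μ write P_μ := ξ_1 · ⋯ · ξ_{μ−1} · ξ'_{μ+1} · ⋯ · ξ'_g (the product of ξ_ν for ν < μ followed by ξ'_ν for ν > μ, in increasing order of indices). Assume: (i) D(α_μ · P_μ) = D(α_μ) · P_μ + α_μ · D(P_μ) for every μ; (ii) D(P_μ) = 0 for every μ; (iii) D(α_μ) = ξ'_μ − ξ_μ for every μ; (iv) for all indices i ≠ j, the elements anticommute pairwise: ξ_i ξ_j = −ξ_j ξ_i, ξ'_i ξ'_j = −ξ'_j ξ'_i, and ξ_i ξ'_j = −ξ'_j ξ_i. Then D( ∑_{μ=1}^g (−1)^{μ−1} α_μ · P_μ ) = ξ'_1 · ⋯ · ξ'_g − ξ_1 · ⋯ · ξ_g. -/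
open List

-- filter = take when predicate holds exactly on the first k elements
lemma filter_eq_take_of_aux {α : Type*} (l : List α) (p : α → Bool) (k : ℕ)
    (h1 : ∀ a ∈ l.take k, p a = true) (h2 : ∀ a ∈ l.drop k, p a = false) :
    l.filter p = l.take k := by
  conv_lhs => rw [← List.take_append_drop k l]
  rw [List.filter_append, List.filter_eq_self.mpr h1,
    List.filter_eq_nil_iff.mpr (fun a ha => by simp [h2 a ha]), List.append_nil]

lemma filter_eq_drop_of_aux {α : Type*} (l : List α) (p : α → Bool) (k : ℕ)
    (h1 : ∀ a ∈ l.take k, p a = false) (h2 : ∀ a ∈ l.drop k, p a = true) :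
    l.filter p = l.drop k := by
  conv_lhs => rw [← List.take_append_drop k l]
  rw [List.filter_append, List.filter_eq_self.mpr h2,
    List.filter_eq_nil_iff.mpr (fun a ha => by simp [h1 a ha]), List.nil_append]

lemma mem_take_finRange {g k : ℕ} {a : Fin g} (h : a ∈ (finRange g).take k) :
    (a : ℕ) < k := by
  obtain ⟨i, hi, rfl⟩ := List.mem_iff_getElem.mp h
  simp at hi ⊢
  omega

lemma mem_drop_finRange {g k : ℕ} {a : Fin g} (h : a ∈ (finRange g).drop k) :
    k ≤ (a : ℕ) := by
  obtain ⟨i, hi, rfl⟩ := List.mem_iff_getElem.mp h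
  simp

lemma swap_prod_aux {A : Type*} [Ring A] (x : A) :
    ∀ (l : List A), (∀ a ∈ l, x * a = -(a * x)) →
      x * l.prod = (-1) ^ l.length * (l.prod * x)
  | [], _ => by simp
  | a :: l, h => by
    have ha := h a (by simp)
    have ih := swap_prod_aux x l (fun b hb => h b (by simp [hb]))
    have hc : ∀ b : A, (-1 : A) ^ l.length * b = b * (-1) ^ l.length :=
      fun b => ((Commute.neg_one_left b).pow_left l.length).eq
    calc x * (a :: l).prod = (x * a) * l.prod := by rw [prod_cons, mul_assoc]
      _ = -(a * (x * l.prod)) := by rw [ha, neg_mul, mul_assoc]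
      _ = -(a * ((-1) ^ l.length * (l.prod * x))) := by rw [ih]
      _ = (-1) ^ (a :: l).length * ((a :: l).prod * x) := by
          simp only [length_cons, prod_cons, pow_succ', neg_one_mul, neg_mul]
          rw [hc, one_mul, hc]
          simp [mul_assoc]

open List in
theorem telescoping_wedge_identity {A : Type*} [Ring A] (g : ℕ) (hg : 1 ≤ g)
    (D : A →+ A) (ξ ξ' α : Fin g → A)
    (P : Fin g → A)
    (hP : ∀ μ : Fin g,
      P μ = (((List.finRange g).filter (fun ν => ν < μ)).map ξ).prod *
            (((List.finRange g).filter (fun ν => μ < ν)).map ξ').prod)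
    (hLeibniz : ∀ μ : Fin g, D (α μ * P μ) = D (α μ) * P μ + α μ * D (P μ))
    (hPclosed : ∀ μ : Fin g, D (P μ) = 0)
    (hα : ∀ μ : Fin g, D (α μ) = ξ' μ - ξ μ)
    (hanti : ∀ i j : Fin g, i ≠ j →
      ξ i * ξ j = -(ξ j * ξ i) ∧ ξ' i * ξ' j = -(ξ' j * ξ' i) ∧
        ξ i * ξ' j = -(ξ' j * ξ i)) :
    D (∑ μ : Fin g, (-1 : A) ^ (μ : ℕ) * (α μ * P μ)) =
      ((List.finRange g).map ξ').prod - ((List.finRange g).map ξ).prod := by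
  classical
  set L := List.finRange g with hL
  have hfl : ∀ μ : Fin g, (L.filter (fun ν => ν < μ)) = L.take (μ : ℕ) := by
    intro μ
    apply filter_eq_take_of_aux
    · intro a ha
      simp only [decide_eq_true_eq, Fin.lt_def]
      exact mem_take_finRange ha
    · intro a ha
      have := mem_drop_finRange ha
      simp only [decide_eq_false_iff_not, Fin.lt_def, not_lt]
      omega
  have hfg : ∀ μ : Fin g, (L.filter (fun ν => μ < ν)) = L.drop ((μ : ℕ) + 1) := by
    intro μ
    apply filter_eq_drop_of_aux
    · intro a ha
      have := mem_take_finRange ha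
      simp only [decide_eq_false_iff_not, Fin.lt_def, not_lt]
      omega
    · intro a ha
      have := mem_drop_finRange ha
      simp only [decide_eq_true_eq, Fin.lt_def]
      omega
  set F : ℕ → A := fun k => ((L.take k).map ξ).prod * ((L.drop k).map ξ').prod with hF
  have hsq : (-1 : A) ^ (0:ℕ) = 1 := pow_zero _
  have hsq2 : ∀ (n : ℕ) (X Y : A), (-1:A)^n * ((-1:A)^n * X) * Y = X * Y := by
    intro n X Y
    rw [← mul_assoc ((-1:A)^n) ((-1:A)^n) X, ← pow_add,
      Even.neg_one_pow ⟨n, rfl⟩, one_mul]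
  have hsq3 : ∀ (n : ℕ) (X Y : A), (-1:A)^n * ((-1:A)^n * X * Y) = X * Y := by
    intro n X Y
    rw [← mul_assoc ((-1:A)^n) ((-1:A)^n * X) Y, ← mul_assoc ((-1:A)^n) ((-1:A)^n) X,
      ← pow_add, Even.neg_one_pow ⟨n, rfl⟩, one_mul]
  have hdropcons : ∀ μ : Fin g, L.drop (μ : ℕ) = μ :: L.drop ((μ : ℕ) + 1) := by
    intro μ
    rw [hL, List.drop_eq_getElem_cons (by simp [μ.isLt]), List.getElem_finRange]
    rfl
  have htakesucc : ∀ μ : Fin g, L.take ((μ:ℕ)+1) = L.take (μ:ℕ) ++ [μ] := by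
    intro μ
    rw [hL, List.take_succ, List.getElem?_eq_getElem (by simp [μ.isLt]),
      List.getElem_finRange]
    rfl
  have hlen : ∀ μ : Fin g, ((L.take (μ:ℕ)).map ξ).length = (μ:ℕ) := by
    intro μ
    simp only [List.length_map, List.length_take, hL, List.length_finRange]
    omega
  have key1 : ∀ μ : Fin g, (-1:A)^(μ:ℕ) * (ξ' μ * P μ) = F (μ:ℕ) := by
    intro μ
    have anti : ∀ a ∈ (L.take (μ:ℕ)).map ξ, ξ' μ * a = -(a * ξ' μ) := by
      intro a ha
      obtain ⟨ν, hν, rfl⟩ := List.mem_map.mp ha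
      have hνμ : ν ≠ μ := by
        have := mem_take_finRange hν
        exact fun h => by simp [h] at this
      rw [(hanti ν μ hνμ).2.2, neg_neg]
    rw [hP μ, hfl μ, hfg μ, ← mul_assoc (ξ' μ), swap_prod_aux (ξ' μ) _ anti, hlen μ, hF]
    simp only
    rw [hdropcons μ, List.map_cons, List.prod_cons, hsq3, mul_assoc]
  have key2 : ∀ μ : Fin g, (-1:A)^(μ:ℕ) * (ξ μ * P μ) = F ((μ:ℕ)+1) := by
    intro μ
    have anti : ∀ a ∈ (L.take (μ:ℕ)).map ξ, ξ μ * a = -(a * ξ μ) := by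
      intro a ha
      obtain ⟨ν, hν, rfl⟩ := List.mem_map.mp ha
      have hνμ : μ ≠ ν := by
        have := mem_take_finRange hν
        exact fun h => by simp [h] at this
      exact (hanti μ ν hνμ).1
    rw [hP μ, hfl μ, hfg μ, ← mul_assoc (ξ μ), swap_prod_aux (ξ μ) _ anti, hlen μ, hF]
    simp only
    rw [htakesucc μ, List.map_append, List.prod_append, List.map_singleton,
      List.prod_singleton]
    exact hsq3 _ _ _
  have hDsign : ∀ (n : ℕ) (x : A), D ((-1:A)^n * x) = (-1:A)^n * D x := by
    intro n x
    rcases Nat.even_or_odd n with h | h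
    · rw [h.neg_one_pow, one_mul, one_mul]
    · rw [h.neg_one_pow, neg_one_mul, neg_one_mul, map_neg]
  calc D (∑ μ : Fin g, (-1 : A) ^ (μ : ℕ) * (α μ * P μ))
      = ∑ μ : Fin g, D ((-1 : A) ^ (μ : ℕ) * (α μ * P μ)) := map_sum D _ _
    _ = ∑ μ : Fin g, (F (μ:ℕ) - F ((μ:ℕ)+1)) := by
        refine Finset.sum_congr rfl fun μ _ => ?_
        rw [hDsign, hLeibniz μ, hPclosed μ, mul_zero, add_zero, hα μ, sub_mul,
          mul_sub, key1 μ, key2 μ]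
    _ = ∑ i ∈ Finset.range g, (F i - F (i+1)) :=
        Fin.sum_univ_eq_sum_range (fun i => F i - F (i+1)) g
    _ = F 0 - F g := Finset.sum_range_sub' F g
    _ = (L.map ξ').prod - (L.map ξ).prod := by
        simp [hF, hL, List.take_of_length_le, List.drop_of_length_le]
end
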